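/- Let H be a complex Hilbert space and let L be a finite-dimensional subspace of H with L ≠ H. Let S = {x ∈ H : ‖x‖ = 1} be the unit sphere of H and let P_L denote the orthogonal projection of H onto L. Then P_L maps S onto the closed unit ball B_L = {y ∈ L : ‖y‖ ≤ 1} of L, and the restriction P_L|_S : S → B_L is an open map: the image of every relatively open subset of S is relatively open in B_L. -/

import Mathlib

open scoped ComplexInnerProductSpace

noncomputable def gmap {H : Type*} [NormedAddCommGroup H] [InnerProductSpace ℂ H]
    (L : Submodule ℂ H) (e : H) (y : L) : H :=
  (y : H) + Real.sqrt (1 - ‖y‖ ^ 2) • e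

lemma gmap_continuous {H : Type*} [NormedAddCommGroup H] [InnerProductSpace ℂ H]
    (L : Submodule ℂ H) (e : H) : Continuous (gmap L e) := by
  apply Continuous.add continuous_subtype_val
  exact ((Real.continuous_sqrt.comp (by fun_prop)).smul continuous_const)

lemma gmap_props {H : Type*} [NormedAddCommGroup H] [InnerProductSpace ℂ H] [CompleteSpace H]
    (L : Submodule ℂ H) [FiniteDimensional ℂ L] {e : H} (he : e ∈ Lᗮ) (hne : ‖e‖ = 1)
    {y : L} (hy : ‖y‖ ≤ 1) :
    ‖gmap L e y‖ = 1 ∧ Submodule.orthogonalProjectionOnto L (gmap L e y) = y := by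
  set t := Real.sqrt (1 - ‖y‖ ^ 2) with ht
  have hmem : t • e ∈ Lᗮ := Submodule.smul_of_tower_mem _ t he
  have hinner : ⟪(y : H), t • e⟫ = 0 :=
    Submodule.inner_right_of_mem_orthogonal y.2 hmem
  constructor
  · have hsq : ‖gmap L e y‖ ^ 2 = ‖(y:H)‖ ^ 2 + ‖t • e‖ ^ 2 := by
      have h := norm_add_sq_eq_norm_sq_add_norm_sq_of_inner_eq_zero _ _ hinner
      show ‖(y:H) + t • e‖ ^ 2 = _
      rw [pow_two, pow_two, pow_two]; exact h
    have ht2 : ‖t • e‖ ^ 2 = 1 - ‖y‖ ^ 2 := by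
      rw [norm_smul, hne, mul_one, Real.norm_eq_abs, sq_abs, ht, Real.sq_sqrt]
      nlinarith [hy, norm_nonneg y]
    have : ‖gmap L e y‖ ^ 2 = 1 := by
      rw [hsq, ht2]; simp
    nlinarith [norm_nonneg (gmap L e y)]
  · rw [gmap, map_add]
    rw [Submodule.orthogonalProjectionOnto_mem_subspace_eq_self (K := L) y,
      Submodule.orthogonalProjectionOnto_apply_of_mem_orthogonal hmem, add_zero]

theorem stmt17 {H : Type*} [NormedAddCommGroup H] [InnerProductSpace ℂ H] [CompleteSpace H]
    (L : Submodule ℂ H) [FiniteDimensional ℂ L] (hL : L ≠ ⊤) :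
    (⇑(Submodule.orthogonalProjectionOnto L)) '' Metric.sphere (0 : H) 1 = Metric.closedBall (0 : L) 1 ∧
    ∀ U : Set H, IsOpen U → ∃ V : Set L, IsOpen V ∧
      (⇑(Submodule.orthogonalProjectionOnto L)) '' (U ∩ Metric.sphere (0 : H) 1) =
        V ∩ Metric.closedBall (0 : L) 1 := by
  -- existence of a unit vector in Lᗮ
  obtain ⟨e₀, he₀, hne₀⟩ : ∃ e, e ∈ Lᗮ ∧ ‖e‖ = 1 := by
    have : Lᗮ ≠ ⊥ := by
      intro h; exact hL ((Submodule.orthogonal_eq_bot_iff (K := L)).mp h)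
    obtain ⟨v, hv, hv0⟩ := Submodule.exists_mem_ne_zero_of_ne_bot this
    refine ⟨‖v‖⁻¹ • v, Submodule.smul_of_tower_mem _ _ hv, ?_⟩
    rw [norm_smul, norm_inv, norm_norm, inv_mul_cancel₀ (norm_ne_zero_iff.2 hv0)]
  -- key decomposition lemma
  have key : ∀ x : H, ‖x‖ = 1 → ∃ e, e ∈ Lᗮ ∧ ‖e‖ = 1 ∧
      ‖(Submodule.orthogonalProjectionOnto L x : L)‖ ≤ 1 ∧ gmap L e (Submodule.orthogonalProjectionOnto L x) = x := by
    intro x hx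
    set y := Submodule.orthogonalProjectionOnto L x with hy
    set z := x - (y : H) with hz
    have hzmem : z ∈ Lᗮ := Submodule.sub_starProjection_mem_orthogonal x
    have hinner : ⟪(y : H), z⟫ = 0 := Submodule.inner_right_of_mem_orthogonal y.2 hzmem
    have hsum : (y : H) + z = x := by rw [hz]; abel
    have hsq : ‖x‖ ^ 2 = ‖(y:H)‖ ^ 2 + ‖z‖ ^ 2 := by
      rw [← hsum]
      have h := norm_add_sq_eq_norm_sq_add_norm_sq_of_inner_eq_zero _ _ hinner
      rw [pow_two, pow_two, pow_two]; exact h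
    rw [hx] at hsq
    have hy1 : ‖y‖ ≤ 1 := by
      have : ‖(y : H)‖ ^ 2 ≤ 1 := by nlinarith [norm_nonneg z]
      have h2 : ‖(y : H)‖ ≤ 1 := by nlinarith [hy, norm_nonneg y]
      simpa using h2
    have hzn : ‖z‖ = Real.sqrt (1 - ‖y‖ ^ 2) := by
      rw [show (1 : ℝ) - ‖y‖ ^ 2 = ‖z‖ ^ 2 by simp only [Submodule.norm_coe] at hsq; nlinarith]
      exact (Real.sqrt_sq (norm_nonneg z)).symm
    by_cases hz0 : z = 0
    · refine ⟨e₀, he₀, hne₀, hy1, ?_⟩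
      have : Real.sqrt (1 - ‖y‖ ^ 2) = 0 := by rw [← hzn, hz0, norm_zero]
      rw [gmap, this, zero_smul, add_zero, ← hsum, hz0, add_zero]
    · refine ⟨‖z‖⁻¹ • z, Submodule.smul_of_tower_mem _ _ hzmem, ?_, hy1, ?_⟩
      · rw [norm_smul, norm_inv, norm_norm, inv_mul_cancel₀ (norm_ne_zero_iff.2 hz0)]
      · rw [gmap, ← hzn, smul_smul, mul_inv_cancel₀ (norm_ne_zero_iff.2 hz0), one_smul, hsum]
  constructor
  · ext y
    simp only [Set.mem_image, Metric.mem_sphere, Metric.mem_closedBall, dist_zero_right]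
    constructor
    · rintro ⟨x, hx, rfl⟩
      obtain ⟨e, he, hne, hy1, -⟩ := key x hx
      exact hy1
    · intro hy
      obtain ⟨h1, h2⟩ := gmap_props L he₀ hne₀ hy
      exact ⟨gmap L e₀ y, h1, h2⟩
  · intro U hU
    refine ⟨⋃ e ∈ {e : H | e ∈ Lᗮ ∧ ‖e‖ = 1}, gmap L e ⁻¹' U, ?_, ?_⟩
    · exact isOpen_biUnion fun e _ => (gmap_continuous L e).isOpen_preimage U hU
    · ext y
      simp only [Set.mem_image, Set.mem_inter_iff, Metric.mem_sphere, Metric.mem_closedBall,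
        dist_zero_right, Set.mem_iUnion, Set.mem_preimage, Set.mem_setOf_eq]
      constructor
      · rintro ⟨x, ⟨hxU, hx⟩, rfl⟩
        obtain ⟨e, he, hne, hy1, hg⟩ := key x hx
        exact ⟨⟨e, ⟨he, hne⟩, by rw [hg]; exact hxU⟩, hy1⟩
      · rintro ⟨⟨e, ⟨he, hne⟩, heU⟩, hy⟩
        obtain ⟨h1, h2⟩ := gmap_props L he hne hy
        exact ⟨gmap L e y, ⟨heU, h1⟩, h2⟩
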